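/- Gauss summation formula: let a, b, c be complex numbers such that c is not a nonpositive integer and Re(c − a − b) > 0. Then the Gauss hypergeometric series converges at x = 1 and F(a, b; c; 1) = ∑_{n=0}^∞ (a)_n (b)_n / ((c)_n n!) = Γ(c) Γ(c − a − b) / (Γ(c − a) Γ(c − b)). -/

import Mathlib

/-- The general term of the Gauss hypergeometric series `F(a, b; c; x)`:
`((a)_n (b)_n) / ((c)_n n!) * x ^ n`, where `(q)_n` is the Pochhammer symbol
(rising factorial). -/
noncomputable def gaussHypTerm (a b c x : ℂ) (n : ℕ) : ℂ :=
  (ascPochhammer ℂ n).eval a * (ascPochhammer ℂ n).eval b /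
    ((ascPochhammer ℂ n).eval c * (n.factorial : ℂ)) * x ^ n

open Filter Finset Topology

lemma poch_prod (s : ℂ) (n : ℕ) :
    (ascPochhammer ℂ n).eval s = ∏ j ∈ Finset.range n, (s + j) := by
  induction n with
  | zero => simp
  | succ n ih => rw [ascPochhammer_succ_eval, ih, Finset.prod_range_succ]

lemma poch_ne_zero {s : ℂ} (hs : ∀ k : ℕ, s ≠ -(k:ℂ)) (n : ℕ) :
    (ascPochhammer ℂ n).eval s ≠ 0 := by
  rw [poch_prod]
  exact Finset.prod_ne_zero_iff.2 fun j _ => by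
    have := hs j; intro h; apply this; linear_combination h

lemma poch_succ_left (s : ℂ) (n : ℕ) :
    (ascPochhammer ℂ (n+1)).eval s = s * (ascPochhammer ℂ n).eval (s+1) := by
  rw [poch_prod, poch_prod, Finset.prod_range_succ']
  rw [mul_comm]
  congr 1
  · simp
  · exact Finset.prod_congr rfl fun j _ => by push_cast; ring

noncomputable def t (a b c : ℂ) (n : ℕ) : ℂ := gaussHypTerm a b c 1 n

lemma t_def (a b c : ℂ) (n : ℕ) : t a b c n =
    (ascPochhammer ℂ n).eval a * (ascPochhammer ℂ n).eval b /
      ((ascPochhammer ℂ n).eval c * (n.factorial : ℂ)) := by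
  simp [t, gaussHypTerm]

lemma step_pointwise (a b c : ℂ) (hc : ∀ k : ℕ, c ≠ -(k:ℂ)) (n : ℕ) :
    c*(c-a-b) * t a b c n - (c-a)*(c-b) * t a b (c+1) n
      = (-(((n+1 : ℕ)):ℂ) * c * t a b c (n+1)) - (-(n:ℂ) * c * t a b c n) := by
  have hc0 : c ≠ 0 := by simpa using hc 0
  have hcn : c + (n:ℂ) ≠ 0 := fun h => hc n (by linear_combination h)
  have hPc : (ascPochhammer ℂ n).eval c ≠ 0 := poch_ne_zero hc n
  have hF : ((n.factorial : ℕ) : ℂ) ≠ 0 := Nat.cast_ne_zero.2 n.factorial_ne_zero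
  have hN1 : ((n:ℂ) + 1) ≠ 0 := by
    have := Nat.cast_ne_zero (R := ℂ).2 (Nat.succ_ne_zero n)
    push_cast at this; exact this
  have hc1 : (ascPochhammer ℂ n).eval (c+1) = (ascPochhammer ℂ n).eval c * (c + n) / c := by
    field_simp
    rw [← poch_succ_left, ascPochhammer_succ_eval]
  simp only [t_def, ascPochhammer_succ_eval, hc1, Nat.factorial_succ, Nat.cast_mul,
    Nat.cast_add, Nat.cast_one]
  have hPc1 : (ascPochhammer ℂ n).eval c * (c + n) / c ≠ 0 := by
    apply div_ne_zero (mul_ne_zero hPc hcn) hc0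
  field_simp
  ring

lemma tendsto_div_nat (z w : ℂ) : Tendsto (fun n : ℕ => z / (w + n)) atTop (𝓝 0) := by
  rw [tendsto_zero_iff_norm_tendsto_zero]
  have hb : Tendsto (fun n : ℕ => ‖z‖ * ((n : ℝ) - ‖w‖)⁻¹) atTop (𝓝 0) := by
    have h1 : Tendsto (fun n : ℕ => (n : ℝ) - ‖w‖) atTop atTop :=
      tendsto_atTop_add_const_right _ _ tendsto_natCast_atTop_atTop
    simpa using h1.inv_tendsto_atTop.const_mul ‖z‖
  apply squeeze_zero' (Eventually.of_forall fun n => norm_nonneg _) _ hb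
  have h2 : ∀ᶠ n : ℕ in atTop, ‖w‖ + 1 ≤ (n : ℝ) := by
    obtain ⟨N, hN⟩ := exists_nat_ge (‖w‖ + 1)
    filter_upwards [eventually_ge_atTop N] with n hn
    exact hN.trans (by exact_mod_cast hn)
  filter_upwards [h2] with n hn
  have hpos : (0:ℝ) < (n : ℝ) - ‖w‖ := by linarith
  have hle : (n : ℝ) - ‖w‖ ≤ ‖w + n‖ := by
    have h := norm_sub_norm_le (((n:ℕ):ℂ)) (-w)
    rw [sub_neg_eq_add, norm_neg, Complex.norm_natCast] at h
    rwa [add_comm ((n:ℕ):ℂ) w] at h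
  rw [norm_div]
  rw [div_eq_mul_inv]
  gcongr

lemma tendsto_ratio (u w : ℂ) : Tendsto (fun n : ℕ => (u + n) / (w + n)) atTop (𝓝 1) := by
  have h0 : ∀ᶠ n : ℕ in atTop, w + (n:ℂ) ≠ 0 := by
    have h2 : ∀ᶠ n : ℕ in atTop, ‖w‖ + 1 ≤ (n : ℝ) := by
      obtain ⟨N, hN⟩ := exists_nat_ge (‖w‖ + 1)
      filter_upwards [eventually_ge_atTop N] with n hn
      exact hN.trans (by exact_mod_cast hn)
    filter_upwards [h2] with n hn hzero
    have : ((n:ℕ):ℂ) = -w := by linear_combination hzero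
    have : (n:ℝ) = ‖w‖ := by
      rw [← Complex.norm_natCast n, this, norm_neg]
    linarith
  have key : Tendsto (fun n : ℕ => 1 + (u - w) / (w + n)) atTop (𝓝 1) := by
    have := (tendsto_div_nat (u - w) w).const_add 1
    simpa using this
  apply key.congr'
  filter_upwards [h0] with n hn
  field_simp
  ring

lemma aux_field (Pa Pb Pc F A B C Na Nb P N : ℂ) (hPa : Pa ≠ 0) (hPb : Pb ≠ 0)
    (hPc : Pc ≠ 0) (hF : F ≠ 0) (hA : A ≠ 0) (hB : B ≠ 0) (hC : C ≠ 0)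
    (hNa : Na ≠ 0) (hNb : Nb ≠ 0) :
    Pa * Pb / (Pc * F) * P * N
      = (N * C / (A * B)) * ((P * Na * Nb * F / (Pc * C)) / ((Na * F / (Pa * A)) * (Nb * F / (Pb * B)))) := by
  simp only [div_eq_mul_inv, mul_inv, inv_inv]
  field_simp

lemma gammaSeq_eq (s : ℂ) (n : ℕ) : Complex.GammaSeq s n =
    (n:ℂ)^s * n.factorial / ((ascPochhammer ℂ n).eval s * (s + n)) := by
  rw [Complex.GammaSeq, ← poch_prod, ascPochhammer_succ_eval]

lemma v_tendsto (a b c : ℂ) (ha : ∀ k : ℕ, a ≠ -(k:ℂ)) (hb : ∀ k : ℕ, b ≠ -(k:ℂ))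
    (hc : ∀ k : ℕ, c ≠ -(k:ℂ)) :
    Tendsto (fun n : ℕ => t a b c n * (n:ℂ)^(c-a-b) * n) atTop
      (𝓝 (Complex.Gamma c / (Complex.Gamma a * Complex.Gamma b))) := by
  have hGa := Complex.GammaSeq_tendsto_Gamma a
  have hGb := Complex.GammaSeq_tendsto_Gamma b
  have hGc := Complex.GammaSeq_tendsto_Gamma c
  have hΓa : Complex.Gamma a ≠ 0 := Complex.Gamma_ne_zero ha
  have hΓb : Complex.Gamma b ≠ 0 := Complex.Gamma_ne_zero hb
  have part1 : Tendsto (fun n : ℕ => (n:ℂ) * (c+n) / ((a+n)*(b+n))) atTop (𝓝 1) := by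
    have := (tendsto_ratio 0 a).mul (tendsto_ratio c b)
    rw [mul_one] at this
    apply this.congr
    intro n
    rw [div_mul_div_comm, zero_add]
  have part2 : Tendsto (fun n : ℕ => Complex.GammaSeq c n /
      (Complex.GammaSeq a n * Complex.GammaSeq b n)) atTop
      (𝓝 (Complex.Gamma c / (Complex.Gamma a * Complex.Gamma b))) :=
    hGc.div (hGa.mul hGb) (mul_ne_zero hΓa hΓb)
  have key := part1.mul part2
  rw [one_mul] at key
  apply key.congr'
  filter_upwards [eventually_ge_atTop 1] with n hn
  have hN : ((n:ℕ):ℂ) ≠ 0 := Nat.cast_ne_zero.2 (by omega)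
  have han : a + (n:ℂ) ≠ 0 := fun h => ha n (by linear_combination h)
  have hbn : b + (n:ℂ) ≠ 0 := fun h => hb n (by linear_combination h)
  have hcn : c + (n:ℂ) ≠ 0 := fun h => hc n (by linear_combination h)
  have hPa := poch_ne_zero ha n
  have hPb := poch_ne_zero hb n
  have hPc := poch_ne_zero hc n
  have hF : ((n.factorial : ℕ) : ℂ) ≠ 0 := Nat.cast_ne_zero.2 n.factorial_ne_zero
  have hNa : ((n:ℕ):ℂ) ^ a ≠ 0 := by
    rw [Ne, Complex.cpow_eq_zero_iff]; tauto
  have hNb : ((n:ℕ):ℂ) ^ b ≠ 0 := by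
    rw [Ne, Complex.cpow_eq_zero_iff]; tauto
  have hpow : ((n:ℕ):ℂ)^c = ((n:ℕ):ℂ)^(c-a-b) * ((n:ℕ):ℂ)^a * ((n:ℕ):ℂ)^b := by
    rw [← Complex.cpow_add _ _ hN, ← Complex.cpow_add _ _ hN]
    congr 1; ring
  rw [t_def, gammaSeq_eq, gammaSeq_eq, gammaSeq_eq, hpow]
  exact (aux_field _ _ _ _ _ _ _ _ _ _ _ hPa hPb hPc hF han hbn hcn hNa hNb).symm

lemma t_eventually_zero {a : ℂ} (b c : ℂ) {k : ℕ} (hak : a = -(k:ℂ)) :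
    ∀ n, k + 1 ≤ n → t a b c n = 0 := by
  intro n hn
  have : (ascPochhammer ℂ n).eval a = 0 := by
    rw [poch_prod]
    apply Finset.prod_eq_zero (i := k) (Finset.mem_range.2 (by omega))
    rw [hak]; ring
  rw [t_def, this, zero_mul, zero_div]

lemma t_swap (a b c : ℂ) : t a b c = t b a c := by
  funext n; rw [t_def, t_def, mul_comm]

lemma pow_inv_tendsto {w : ℂ} (hw : 0 < w.re) :
    Tendsto (fun n : ℕ => (((n:ℕ):ℂ) ^ w)⁻¹) atTop (𝓝 0) := by
  rw [tendsto_zero_iff_norm_tendsto_zero]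
  have h1 : Tendsto (fun n : ℕ => (((n:ℝ)) ^ w.re)⁻¹) atTop (𝓝 0) :=
    ((tendsto_rpow_atTop hw).comp tendsto_natCast_atTop_atTop).inv_tendsto_atTop
  apply h1.congr'
  filter_upwards [eventually_ge_atTop 1] with n hn
  have hpos : (0:ℝ) < (n:ℝ) := by exact_mod_cast hn
  rw [norm_inv, ← Complex.ofReal_natCast,
    Complex.norm_cpow_eq_rpow_re_of_pos hpos]

lemma summable_and_tendsto (a b c : ℂ) (hc : ∀ k : ℕ, c ≠ -(k:ℂ)) (hre : 0 < (c-a-b).re) :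
    Summable (t a b c) ∧ Tendsto (fun n : ℕ => (n:ℂ) * t a b c n) atTop (𝓝 0) := by
  have main : ∀ a b : ℂ, (∃ k : ℕ, a = -(k:ℂ)) →
      Summable (t a b c) ∧ Tendsto (fun n : ℕ => (n:ℂ) * t a b c n) atTop (𝓝 0) := by
    rintro a b ⟨k, hk⟩
    constructor
    · apply summable_of_ne_finset_zero (s := Finset.range (k+1))
      intro n hn
      exact t_eventually_zero b c hk n (by simpa using Finset.mem_range.not.1 hn)
    · apply tendsto_const_nhds.congr'
      filter_upwards [eventually_ge_atTop (k+1)] with n hn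
      rw [t_eventually_zero b c hk n hn, mul_zero]
  by_cases ha : ∀ k : ℕ, a ≠ -(k:ℂ)
  · by_cases hb : ∀ k : ℕ, b ≠ -(k:ℂ)
    · -- nondegenerate
      have hv := v_tendsto a b c ha hb hc
      set L := Complex.Gamma c / (Complex.Gamma a * Complex.Gamma b) with hL
      set σ := (c-a-b).re with hσ
      have hbound : ∀ᶠ n : ℕ in atTop, ‖t a b c n * ((n:ℕ):ℂ)^(c-a-b) * (n:ℕ)‖ ≤ ‖L‖ + 1 := by
        have := hv.norm.eventually (eventually_le_nhds (by linarith [norm_nonneg L] : ‖L‖ < ‖L‖ + 1))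
        exact this
      have hid : ∀ᶠ n : ℕ in atTop,
          t a b c n = (t a b c n * ((n:ℕ):ℂ)^(c-a-b) * (n:ℕ)) * (((n:ℕ):ℂ)^(c-a-b))⁻¹ * ((n:ℕ):ℂ)⁻¹ := by
        filter_upwards [eventually_ge_atTop 1] with n hn
        have hN : ((n:ℕ):ℂ) ≠ 0 := Nat.cast_ne_zero.2 (by omega)
        have hP : ((n:ℕ):ℂ)^(c-a-b) ≠ 0 := by
          rw [Ne, Complex.cpow_eq_zero_iff]; tauto
        field_simp
      constructor
      · apply Summable.of_norm_bounded_eventually_nat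
          (g := fun n => (‖L‖ + 1) * (n:ℝ)^(-σ-1))
        · exact (Real.summable_nat_rpow.2 (by linarith)).mul_left _
        · filter_upwards [hbound, eventually_ge_atTop 1] with n hB hn
          have hpos : (0:ℝ) < (n:ℝ) := by exact_mod_cast hn
          have hnorm : ‖t a b c n * ((n:ℕ):ℂ)^(c-a-b) * ((n:ℕ):ℂ)‖
              = ‖t a b c n‖ * (n:ℝ)^σ * (n:ℝ) := by
            rw [norm_mul, norm_mul, ← Complex.ofReal_natCast,
              Complex.norm_cpow_eq_rpow_re_of_pos hpos,
              Complex.norm_real, Real.norm_of_nonneg hpos.le]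
          rw [hnorm] at hB
          have hDpos : (0:ℝ) < (n:ℝ)^σ * (n:ℝ) := by positivity
          have h2 : (n:ℝ)^(-σ-1) = ((n:ℝ)^σ * (n:ℝ))⁻¹ := by
            rw [mul_inv, ← Real.rpow_neg hpos.le, ← Real.rpow_neg_one (n:ℝ), ← Real.rpow_add hpos]
            ring_nf
          rw [h2, ← div_eq_mul_inv, le_div_iff₀ hDpos, ← mul_assoc]
          exact hB
      · have := hv.mul (pow_inv_tendsto (w := c - a - b) hre)
        rw [mul_zero] at this
        apply this.congr'
        filter_upwards [eventually_ge_atTop 1] with n hn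
        have hP : ((n:ℕ):ℂ)^(c-a-b) ≠ 0 := by
          have hN : ((n:ℕ):ℂ) ≠ 0 := Nat.cast_ne_zero.2 (by omega)
          rw [Ne, Complex.cpow_eq_zero_iff]; tauto
        field_simp
    · push_neg at hb
      obtain ⟨k, hk⟩ := hb
      rw [t_swap a b c]
      exact main b a ⟨k, hk⟩
  · push_neg at ha
    exact main a b ha

noncomputable def S (a b c : ℂ) : ℂ := ∑' n, t a b c n

lemma t_zero (a b c : ℂ) : t a b c 0 = 1 := by
  simp [t_def]

lemma norm_t (a b c : ℂ) (n : ℕ) : ‖t a b c n‖ =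
    (∏ j ∈ Finset.range n, ‖a + j‖) * (∏ j ∈ Finset.range n, ‖b + j‖) /
      ((∏ j ∈ Finset.range n, ‖c + j‖) * n.factorial) := by
  rw [t_def, norm_div, norm_mul, norm_mul, poch_prod, poch_prod, poch_prod,
    norm_prod, norm_prod, norm_prod]
  congr
  rw [Complex.norm_natCast]

lemma S_tendsto_one (a b c : ℂ) : Tendsto (fun m : ℕ => S a b (c + m)) atTop (𝓝 1) := by
  set A : ℂ := ((‖a‖ : ℝ) : ℂ) with hA
  set B : ℂ := ((‖b‖ : ℝ) : ℂ) with hB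
  set M : ℂ := ((‖a‖ + ‖b‖ + 1 : ℝ) : ℂ) with hM
  have hMre : ∀ k : ℕ, M ≠ -(k:ℂ) := by
    intro k h
    have : (‖a‖ + ‖b‖ + 1 : ℝ) = -(k:ℝ) := by
      have := congrArg Complex.re h
      simpa [hM] using this
    have h1 : (0:ℝ) ≤ ‖a‖ := norm_nonneg _
    have h2 : (0:ℝ) ≤ ‖b‖ := norm_nonneg _
    have h3 : (0:ℝ) ≤ (k:ℝ) := Nat.cast_nonneg _
    linarith
  have hMAB : 0 < (M - A - B).re := by
    simp [hM, hA, hB]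
    linarith
  have hsum : Summable (fun n => ‖t A B M n‖) :=
    (summable_and_tendsto A B M hMre hMAB).1.norm
  set g : ℕ → ℂ := fun n => if n = 0 then 1 else 0 with hg
  have key : Tendsto (fun m : ℕ => ∑' n, t a b (c + (m:ℕ)) n) atTop (𝓝 (∑' n, g n)) := by
    apply tendsto_tsum_of_dominated_convergence hsum
    · -- pointwise limits
      intro n
      rcases Nat.eq_zero_or_pos n with h0 | hpos
      · subst h0
        simp only [t_zero, hg, if_pos rfl]
        exact tendsto_const_nhds
      · have hne : n ≠ 0 := hpos.ne'
        simp only [hg, if_neg hne]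
        have hfac : ∀ m : ℕ, t a b (c + m) n =
            ((ascPochhammer ℂ n).eval a * (ascPochhammer ℂ n).eval b / (n.factorial : ℂ)) *
              ((ascPochhammer ℂ n).eval (c + m))⁻¹ := by
          intro m
          rw [t_def, div_eq_mul_inv, div_eq_mul_inv, mul_inv]
          ring
        have hinv : Tendsto (fun m : ℕ => ((ascPochhammer ℂ n).eval (c + (m:ℕ)))⁻¹)
            atTop (𝓝 0) := by
          have : Tendsto (fun m : ℕ => ∏ j ∈ Finset.range n, (c + (m:ℕ) + (j:ℕ))⁻¹)
              atTop (𝓝 (∏ j ∈ Finset.range n, (0:ℂ))) := by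
            apply tendsto_finset_prod
            intro j _
            have := tendsto_div_nat 1 (c + j)
            simp only [one_div] at this
            apply this.congr
            intro m
            congr 1
            ring
          rw [Finset.prod_const, Finset.card_range, zero_pow hne] at this
          apply this.congr
          intro m
          rw [poch_prod, ← Finset.prod_inv_distrib]
        have := hinv.const_mul
          ((ascPochhammer ℂ n).eval a * (ascPochhammer ℂ n).eval b / (n.factorial : ℂ))
        rw [mul_zero] at this
        exact this.congr fun m => (hfac m).symm
    · -- domination
      obtain ⟨m₀, hm₀⟩ := exists_nat_ge (‖c‖ + ‖a‖ + ‖b‖ + 1)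
      filter_upwards [eventually_ge_atTop m₀] with m hm n
      rw [norm_t, norm_t]
      have habs : ∀ x : ℝ, 0 ≤ x → ∀ j : ℕ, ‖((x:ℝ):ℂ) + (j:ℕ)‖ = x + j := by
        intro x hx j
        rw [show ((x:ℝ):ℂ) + (j:ℕ) = ((x + j : ℝ) : ℂ) by push_cast; ring,
          Complex.norm_real, Real.norm_of_nonneg (by positivity)]
      have hmR : (‖c‖ + ‖a‖ + ‖b‖ + 1 : ℝ) ≤ (m:ℝ) := hm₀.trans (by exact_mod_cast hm)
      apply div_le_div₀
      · positivity
      · apply mul_le_mul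
        · apply Finset.prod_le_prod (fun j _ => norm_nonneg _)
          intro j _
          rw [habs _ (norm_nonneg a) j]
          calc ‖a + j‖ ≤ ‖a‖ + ‖(j:ℂ)‖ := norm_add_le _ _
          _ = ‖a‖ + j := by rw [Complex.norm_natCast]
        · apply Finset.prod_le_prod (fun j _ => norm_nonneg _)
          intro j _
          rw [habs _ (norm_nonneg b) j]
          calc ‖b + j‖ ≤ ‖b‖ + ‖(j:ℂ)‖ := norm_add_le _ _
          _ = ‖b‖ + j := by rw [Complex.norm_natCast]
        · positivity
        · positivity
      · have : (0:ℝ) < ∏ j ∈ Finset.range n, (‖a‖ + ‖b‖ + 1 + j) := by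
          apply Finset.prod_pos
          intro j _
          have := norm_nonneg a; have := norm_nonneg b
          have : (0:ℝ) ≤ (j:ℝ) := Nat.cast_nonneg _
          positivity
        have h2 : (0:ℝ) < (n.factorial : ℝ) := by exact_mod_cast n.factorial_pos
        calc (0:ℝ) < (∏ j ∈ Finset.range n, (‖a‖ + ‖b‖ + 1 + j)) * n.factorial := by positivity
        _ = (∏ j ∈ Finset.range n, ‖M + (j:ℕ)‖) * n.factorial := by
          congr 1
          exact Finset.prod_congr rfl fun j _ => (habs _ (by positivity) j).symm
      · apply mul_le_mul_of_nonneg_right _ (Nat.cast_nonneg _)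
        apply Finset.prod_le_prod
        · intro j _
          rw [habs _ (by positivity) j]
          have : (0:ℝ) ≤ (j:ℝ) := Nat.cast_nonneg _
          have := norm_nonneg a; have := norm_nonneg b
          positivity
        · intro j _
          rw [habs _ (by positivity) j]
          have htri : (m:ℝ) + j - ‖c‖ ≤ ‖c + m + j‖ := by
            have h := norm_sub_norm_le (((m:ℕ):ℂ) + ((j:ℕ):ℂ)) (-c)
            rw [sub_neg_eq_add, norm_neg] at h
            have hnm : ‖((m:ℕ):ℂ) + ((j:ℕ):ℂ)‖ = (m:ℝ) + j := by
              rw [show ((m:ℕ):ℂ) + ((j:ℕ):ℂ) = (((m + j : ℕ)):ℂ) by push_cast; ring,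
                Complex.norm_natCast]
              push_cast; ring
            rw [hnm] at h
            calc (m:ℝ) + j - ‖c‖ ≤ ‖(((m:ℕ):ℂ) + ((j:ℕ):ℂ)) + c‖ := h
            _ = ‖c + m + j‖ := by rw [show (((m:ℕ):ℂ) + ((j:ℕ):ℂ)) + c = c + m + j by ring]
          have : ‖a‖ + ‖b‖ + 1 + j ≤ (m:ℝ) + j - ‖c‖ := by linarith
          linarith
  have htsum : ∑' n, g n = 1 := by
    rw [hg]
    exact tsum_ite_eq 0 1
  rw [htsum] at key
  exact key

lemma hc_add {c : ℂ} (hc : ∀ k : ℕ, c ≠ -(k:ℂ)) (m : ℕ) :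
    ∀ k : ℕ, c + (m:ℂ) ≠ -(k:ℂ) := by
  intro k h
  apply hc (k + m)
  push_cast
  linear_combination h

lemma hre_add {a b c : ℂ} (hre : 0 < (c - a - b).re) (m : ℕ) :
    0 < (c + (m:ℂ) - a - b).re := by
  have : (c + (m:ℂ) - a - b).re = (c - a - b).re + m := by
    simp [Complex.add_re, Complex.sub_re, Complex.natCast_re]
    ring
  rw [this]
  have : (0:ℝ) ≤ (m:ℝ) := Nat.cast_nonneg _
  linarith

lemma step_sum (a b c : ℂ) (hc : ∀ k : ℕ, c ≠ -(k:ℂ)) (hre : 0 < (c - a - b).re) :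
    c * (c - a - b) * S a b c = (c - a) * (c - b) * S a b (c + 1) := by
  obtain ⟨hS, hT⟩ := summable_and_tendsto a b c hc hre
  have hc1 : ∀ k : ℕ, c + 1 ≠ -(k:ℂ) := by
    have := hc_add hc 1
    simpa using this
  have hre1 : 0 < (c + 1 - a - b).re := by
    have := hre_add (a := a) (b := b) hre 1
    simpa using this
  obtain ⟨hS', _⟩ := summable_and_tendsto a b (c + 1) hc1 hre1
  have hD : HasSum (fun n => c * (c - a - b) * t a b c n - (c - a) * (c - b) * t a b (c + 1) n)
      (c * (c - a - b) * S a b c - (c - a) * (c - b) * S a b (c + 1)) :=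
    (hS.hasSum.mul_left _).sub (hS'.hasSum.mul_left _)
  have h1 := hD.tendsto_sum_nat
  have h2 : Tendsto (fun N => ∑ n ∈ Finset.range N,
      (c * (c - a - b) * t a b c n - (c - a) * (c - b) * t a b (c + 1) n)) atTop (𝓝 0) := by
    have heq : ∀ N, ∑ n ∈ Finset.range N,
        (c * (c - a - b) * t a b c n - (c - a) * (c - b) * t a b (c + 1) n)
          = -(N:ℂ) * c * t a b c N := by
      intro N
      rw [Finset.sum_congr rfl (fun n _ => step_pointwise a b c hc n),
        Finset.sum_range_sub (fun n => -(n:ℂ) * c * t a b c n)]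
      simp
    have := hT.const_mul (-c)
    rw [mul_zero] at this
    apply this.congr
    intro N
    rw [heq N]
    ring
  have h0 := tendsto_nhds_unique h1 h2
  linear_combination h0

lemma iterate_sum (a b c : ℂ) (hc : ∀ k : ℕ, c ≠ -(k:ℂ)) (hre : 0 < (c - a - b).re) (m : ℕ) :
    (∏ k ∈ Finset.range m, ((c + k) * (c + k - a - b))) * S a b c
      = (∏ k ∈ Finset.range m, ((c + k - a) * (c + k - b))) * S a b (c + m) := by
  induction m with
  | zero => simp
  | succ m ih =>
    rw [Finset.prod_range_succ, Finset.prod_range_succ]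
    have hstep := step_sum a b (c + m) (hc_add hc m) (hre_add hre m)
    have hcast : c + ((m+1 : ℕ):ℂ) = c + (m:ℂ) + 1 := by push_cast; ring
    rw [hcast]
    linear_combination ((c + m) * (c + m - a - b)) * ih
      + (∏ k ∈ Finset.range m, ((c + k - a) * (c + k - b))) * hstep

lemma aux_field2 (Pca Pcb Pc Pcab F Xc Xca Xcb Xcab C CA CB CAB : ℂ)
    (hPca : Pca ≠ 0) (hPcb : Pcb ≠ 0) (hPc : Pc ≠ 0) (hPcab : Pcab ≠ 0) (hF : F ≠ 0)
    (hXca : Xca ≠ 0) (hXcb : Xcb ≠ 0) (hC : C ≠ 0) (hCA : CA ≠ 0) (hCB : CB ≠ 0)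
    (hCAB : CAB ≠ 0) (hpow : Xca * Xcb = Xc * Xcab) :
    (Pca * Pcb) * ((Xca * F / (Pca * CA)) * (Xcb * F / (Pcb * CB))) * (CA * CB)
      = (Pc * Pcab) * ((Xc * F / (Pc * C)) * (Xcab * F / (Pcab * CAB))) * (C * CAB) := by
  field_simp
  linear_combination hpow

lemma aux_field3 (Pca Pcb Pc Pcab F Xc Xca Xcb Xcab C CA CB CAB : ℂ)
    (hPca : Pca ≠ 0) (hPcb : Pcb ≠ 0) (hPc : Pc ≠ 0) (hPcab : Pcab ≠ 0) (hF : F ≠ 0)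
    (hXca : Xca ≠ 0) (hXcb : Xcb ≠ 0) (hC : C ≠ 0) (hCA : CA ≠ 0) (hCB : CB ≠ 0)
    (hCAB : CAB ≠ 0) (hpow : Xca * Xcb = Xc * Xcab) :
    Pca * Pcb / (Pc * Pcab)
      = Xc * F / (Pc * C) * (Xcab * F / (Pcab * CAB)) /
          (Xca * F / (Pca * CA) * (Xcb * F / (Pcb * CB))) * (C * CAB / (CA * CB)) := by
  have hmain := aux_field2 Pca Pcb Pc Pcab F Xc Xca Xcb Xcab C CA CB CAB
    hPca hPcb hPc hPcab hF hXca hXcb hC hCA hCB hCAB hpow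
  have hB1 : Xca * F / (Pca * CA) ≠ 0 :=
    div_ne_zero (mul_ne_zero hXca hF) (mul_ne_zero hPca hCA)
  have hB2 : Xcb * F / (Pcb * CB) ≠ 0 :=
    div_ne_zero (mul_ne_zero hXcb hF) (mul_ne_zero hPcb hCB)
  rw [div_mul_div_comm (Xc * F / (Pc * C) * (Xcab * F / (Pcab * CAB)))]
  rw [div_eq_div_iff (mul_ne_zero hPc hPcab)
    (mul_ne_zero (mul_ne_zero hB1 hB2) (mul_ne_zero hCA hCB))]
  linear_combination hmain

/-- Gauss summation formula: if `c` is not a nonpositive integer and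
`Re (c - a - b) > 0`, then the hypergeometric series converges at `x = 1` with sum
`Γ(c) Γ(c - a - b) / (Γ(c - a) Γ(c - b))`. -/
theorem gauss_summation (a b c : ℂ) (hc : ∀ n : ℕ, c ≠ -(n : ℂ))
    (hre : 0 < (c - a - b).re) :
    HasSum (gaussHypTerm a b c 1)
      (Complex.Gamma c * Complex.Gamma (c - a - b) /
        (Complex.Gamma (c - a) * Complex.Gamma (c - b))) := by
  have hre' : 0 < c.re - a.re - b.re := by simpa [Complex.sub_re] using hre
  have hS := (summable_and_tendsto a b c hc hre).1
  have hkey : S a b c = Complex.Gamma c * Complex.Gamma (c - a - b) /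
      (Complex.Gamma (c - a) * Complex.Gamma (c - b)) := by
    by_cases hdeg : (∃ k : ℕ, c - a = -(k:ℂ)) ∨ (∃ k : ℕ, c - b = -(k:ℂ))
    · -- degenerate case: RHS is 0 by Gamma vanishing, and S = 0
      have hDen : ∀ m : ℕ, (∏ k ∈ Finset.range m, ((c + k) * (c + k - a - b))) ≠ 0 := by
        intro m
        apply Finset.prod_ne_zero_iff.2
        intro j _
        apply mul_ne_zero
        · exact fun h => hc j (by linear_combination h)
        · intro h
          have := congrArg Complex.re h
          simp [Complex.sub_re, Complex.add_re, Complex.natCast_re] at this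
          have hj : (0:ℝ) ≤ (j:ℝ) := Nat.cast_nonneg _
          linarith
      have hzero : S a b c = 0 := by
        obtain (⟨k, hk⟩ | ⟨k, hk⟩) := hdeg <;>
        · have hiter := iterate_sum a b c hc hre (k+1)
          have hnum : (∏ j ∈ Finset.range (k+1), ((c + j - a) * (c + j - b))) = 0 := by
            apply Finset.prod_eq_zero (i := k) (Finset.mem_range.2 (Nat.lt_succ_self k))
            first
            | (apply mul_eq_zero_of_left; linear_combination hk)
            | (apply mul_eq_zero_of_right; linear_combination hk)
          rw [hnum, zero_mul] at hiter
          exact (mul_eq_zero.1 hiter).resolve_left (hDen (k+1))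
      have hgamma0 : Complex.Gamma (c - a) * Complex.Gamma (c - b) = 0 := by
        obtain (⟨k, hk⟩ | ⟨k, hk⟩) := hdeg
        · rw [hk, Complex.Gamma_neg_nat_eq_zero, zero_mul]
        · rw [hk, Complex.Gamma_neg_nat_eq_zero, mul_zero]
      rw [hzero, hgamma0, div_zero]
    · push_neg at hdeg
      obtain ⟨hca, hcb⟩ := hdeg
      have hcab : ∀ k : ℕ, c - a - b ≠ -(k:ℂ) := by
        intro k h
        have := congrArg Complex.re h
        simp [Complex.sub_re, Complex.natCast_re] at this
        have hk : (0:ℝ) ≤ (k:ℝ) := Nat.cast_nonneg _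
        linarith
      have hΓca := Complex.Gamma_ne_zero hca
      have hΓcb := Complex.Gamma_ne_zero hcb
      -- the quotient of products tends to the Gamma expression
      have hGS : Tendsto (fun m : ℕ => Complex.GammaSeq c m * Complex.GammaSeq (c-a-b) m /
          (Complex.GammaSeq (c-a) m * Complex.GammaSeq (c-b) m)) atTop
          (𝓝 (Complex.Gamma c * Complex.Gamma (c-a-b) /
            (Complex.Gamma (c-a) * Complex.Gamma (c-b)))) :=
        ((Complex.GammaSeq_tendsto_Gamma c).mul (Complex.GammaSeq_tendsto_Gamma (c-a-b))).div
          (((Complex.GammaSeq_tendsto_Gamma (c-a)).mul (Complex.GammaSeq_tendsto_Gamma (c-b))))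
          (mul_ne_zero hΓca hΓcb)
      have hcorr : Tendsto (fun m : ℕ => (c + m) * (c - a - b + m) /
          ((c - a + m) * (c - b + m))) atTop (𝓝 1) := by
        have := (tendsto_ratio c (c-a)).mul (tendsto_ratio (c-a-b) (c-b))
        rw [mul_one] at this
        apply this.congr
        intro m
        rw [div_mul_div_comm]
      have hP : Tendsto (fun m : ℕ =>
          (∏ k ∈ Finset.range m, ((c + k - a) * (c + k - b))) /
            (∏ k ∈ Finset.range m, ((c + k) * (c + k - a - b)))) atTop
          (𝓝 (Complex.Gamma c * Complex.Gamma (c-a-b) /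
            (Complex.Gamma (c-a) * Complex.Gamma (c-b)))) := by
        have hlim := hGS.mul hcorr
        rw [mul_one] at hlim
        apply hlim.congr'
        filter_upwards [eventually_ge_atTop 1] with m hm
        have hN : ((m:ℕ):ℂ) ≠ 0 := Nat.cast_ne_zero.2 (by omega)
        have hC : c + (m:ℂ) ≠ 0 := fun h => hc m (by linear_combination h)
        have hCA : c - a + (m:ℂ) ≠ 0 := fun h => hca m (by linear_combination h)
        have hCB : c - b + (m:ℂ) ≠ 0 := fun h => hcb m (by linear_combination h)
        have hCAB : c - a - b + (m:ℂ) ≠ 0 := fun h => hcab m (by linear_combination h)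
        have hPc := poch_ne_zero hc m
        have hPca := poch_ne_zero hca m
        have hPcb := poch_ne_zero hcb m
        have hPcab := poch_ne_zero hcab m
        have hF : ((m.factorial : ℕ) : ℂ) ≠ 0 := Nat.cast_ne_zero.2 m.factorial_ne_zero
        have hXca : ((m:ℕ):ℂ) ^ (c-a) ≠ 0 := by
          rw [Ne, Complex.cpow_eq_zero_iff]; tauto
        have hXcb : ((m:ℕ):ℂ) ^ (c-b) ≠ 0 := by
          rw [Ne, Complex.cpow_eq_zero_iff]; tauto
        have hpow : ((m:ℕ):ℂ)^(c-a) * ((m:ℕ):ℂ)^(c-b)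
            = ((m:ℕ):ℂ)^c * ((m:ℕ):ℂ)^(c-a-b) := by
          rw [← Complex.cpow_add _ _ hN, ← Complex.cpow_add _ _ hN]
          congr 1; ring
        have e1 : (∏ k ∈ Finset.range m, ((c + k - a) * (c + k - b)))
            = (ascPochhammer ℂ m).eval (c-a) * (ascPochhammer ℂ m).eval (c-b) := by
          rw [Finset.prod_mul_distrib, poch_prod, poch_prod]
          congr 1 <;> exact Finset.prod_congr rfl fun k _ => by ring
        have e2 : (∏ k ∈ Finset.range m, ((c + k) * (c + k - a - b)))
            = (ascPochhammer ℂ m).eval c * (ascPochhammer ℂ m).eval (c-a-b) := by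
          rw [Finset.prod_mul_distrib, poch_prod, poch_prod]
          congr 1 <;> exact Finset.prod_congr rfl fun k _ => by ring
        rw [e1, e2, gammaSeq_eq, gammaSeq_eq, gammaSeq_eq, gammaSeq_eq]
        exact (aux_field3 _ _ _ _ _ _ _ _ _ _ _ _ _
          hPca hPcb hPc hPcab hF hXca hXcb hC hCA hCB hCAB hpow).symm
      have hfin := hP.mul (S_tendsto_one a b c)
      rw [mul_one] at hfin
      have hconst : (fun m : ℕ =>
          (∏ k ∈ Finset.range m, ((c + k - a) * (c + k - b))) /
            (∏ k ∈ Finset.range m, ((c + k) * (c + k - a - b))) * S a b (c + m))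
          = fun _ : ℕ => S a b c := by
        funext m
        have hDen : (∏ k ∈ Finset.range m, ((c + k) * (c + k - a - b))) ≠ 0 := by
          apply Finset.prod_ne_zero_iff.2
          intro j _
          apply mul_ne_zero
          · exact fun h => hc j (by linear_combination h)
          · intro h
            have := congrArg Complex.re h
            simp [Complex.sub_re, Complex.add_re, Complex.natCast_re] at this
            have hj : (0:ℝ) ≤ (j:ℝ) := Nat.cast_nonneg _
            linarith
        have hiter := iterate_sum a b c hc hre m
        field_simp
        linear_combination -hiter
      rw [hconst] at hfin
      exact tendsto_nhds_unique tendsto_const_nhds hfin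
  rw [← hkey]
  exact hS.hasSum
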